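/- The set X²₁ = { Σ_{n=1}^∞ δₙ ∏_{j=1}^n ηⱼ : (δₙ) ∈ W^±_θ, first nonzero digit = 1 }, with η₁ = α and η_{j+1} = conj(ηⱼ), satisfies the set equation X²₁ = ψ₁(X²₁) ∪ ψ₂(X²₁), where ψ₁(z) = α·z̄ and ψ₂(z) = α e^{iθ}·z̄ + α. -/

import Mathlib

open Complex

/-- e^{iθ} -/
noncomputable def rot (θ : ℝ) : ℂ := Complex.exp (θ * Complex.I)

/-- The digit set Δ_θ = {0, 1, e^{iθ}, …, e^{(p-1)iθ}}. -/
def Delta (θ : ℝ) (p : ℕ) : Set ℂ := insert 0 {z | ∃ k, k < p ∧ z = rot θ ^ k}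

/-- Signed Revolving Condition: each nonzero digit equals e^{+iθ} times the previous
nonzero digit if its position j₀ is odd, and e^{-iθ} times it if j₀ is even.
Sequences are indexed from 1; index 0 is a dummy (digit 0). -/
def SRC (θ : ℝ) (δ : ℕ → ℂ) : Prop :=
  ∀ j k : ℕ, j < k → δ j ≠ 0 → δ k ≠ 0 → (∀ m, j < m → m < k → δ m = 0) →
    δ k = (if Odd j then rot θ else (rot θ)⁻¹) * δ j

/-- Membership in W^±_θ (with the convention δ 0 = 0, i.e. sequences start at index 1). -/
def Wsigned (θ : ℝ) (p : ℕ) (δ : ℕ → ℂ) : Prop :=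
  δ 0 = 0 ∧ (∀ n, δ n ∈ Delta θ p) ∧ SRC θ δ

/-- The first nonzero digit of δ is c (or δ is identically zero). -/
def FirstNonzero (δ : ℕ → ℂ) (c : ℂ) : Prop :=
  (∀ n, δ n = 0) ∨ ∃ j, δ j = c ∧ ∀ m, m < j → δ m = 0

/-- η_j = α for odd j, conj α for even j. -/
noncomputable def eta (α : ℂ) (j : ℕ) : ℂ := if Odd j then α else starRingEnd ℂ α

/-- X²₁ : points from signed revolving sequences with first nonzero digit 1. -/
noncomputable def X2one (α : ℂ) (θ : ℝ) (p : ℕ) : Set ℂ :=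
  {x | ∃ δ : ℕ → ℂ, Wsigned θ p δ ∧ FirstNonzero δ 1 ∧
    x = ∑' n, δ n * ∏ j ∈ Finset.Icc 1 n, eta α j}

/-- X²_{α,θ} : points from all signed revolving sequences. -/
noncomputable def X2full (α : ℂ) (θ : ℝ) (p : ℕ) : Set ℂ :=
  {x | ∃ δ : ℕ → ℂ, Wsigned θ p δ ∧
    x = ∑' n, δ n * ∏ j ∈ Finset.Icc 1 n, eta α j}

/-! ### Auxiliary lemmas -/

lemma rot_ne_zero (θ : ℝ) : rot θ ≠ 0 := Complex.exp_ne_zero _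

lemma norm_rot (θ : ℝ) : ‖rot θ‖ = 1 := by
  simp [rot, Complex.norm_exp]

lemma conj_rot (θ : ℝ) : starRingEnd ℂ (rot θ) = (rot θ)⁻¹ := by
  unfold rot; rw [← Complex.exp_conj, ← Complex.exp_neg]; congr 1; simp

lemma conj_rot_inv (θ : ℝ) : starRingEnd ℂ (rot θ)⁻¹ = rot θ := by
  rw [map_inv₀, conj_rot, inv_inv]

lemma rot_mul_conj (θ : ℝ) : rot θ * starRingEnd ℂ (rot θ) = 1 := by
  rw [conj_rot, mul_inv_cancel₀ (rot_ne_zero θ)]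

lemma rot_pow_p (θ : ℝ) (p : ℕ) (q : ℤ) (hp : 0 < p)
    (hθ : θ = 2 * Real.pi * (q : ℝ) / (p : ℝ)) : rot θ ^ p = 1 := by
  rw [rot, ← Complex.exp_nat_mul]
  have hpc : (p : ℂ) ≠ 0 := Nat.cast_ne_zero.mpr hp.ne'
  have : (p : ℂ) * (θ * Complex.I) = (q : ℂ) * (2 * Real.pi * Complex.I) := by
    rw [hθ]
    push_cast
    field_simp
  rw [this, Complex.exp_int_mul_two_pi_mul_I]

section DeltaLemmas
variable {θ : ℝ} {p : ℕ} (hrot : rot θ ^ p = 1) (hp : 0 < p)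
include hrot hp

lemma mem_Delta_iff {z : ℂ} : z ∈ Delta θ p ↔ z = 0 ∨ ∃ k : ℕ, z = rot θ ^ k := by
  constructor
  · rintro (h | ⟨k, _, hk⟩)
    · exact Or.inl h
    · exact Or.inr ⟨k, hk⟩
  · rintro (h | ⟨k, hk⟩)
    · exact Or.inl h
    · right
      refine ⟨k % p, Nat.mod_lt _ hp, ?_⟩
      conv_lhs => rw [hk, ← Nat.div_add_mod k p]
      rw [pow_add, pow_mul, hrot, one_pow, one_mul]

lemma one_mem_Delta : (1 : ℂ) ∈ Delta θ p :=
  (mem_Delta_iff hrot hp).mpr (Or.inr ⟨0, (pow_zero _).symm⟩)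

lemma Delta_rotpow_mul (a : ℕ) {z : ℂ} (hz : z ∈ Delta θ p) : rot θ ^ a * z ∈ Delta θ p := by
  rcases (mem_Delta_iff hrot hp).mp hz with h | ⟨k, hk⟩
  · exact (mem_Delta_iff hrot hp).mpr (Or.inl (by simp [h]))
  · exact (mem_Delta_iff hrot hp).mpr (Or.inr ⟨a + k, by rw [hk, pow_add]⟩)

lemma conj_rot_eq : starRingEnd ℂ (rot θ) = rot θ ^ (p - 1) := by
  rw [conj_rot]
  have h : rot θ ^ (p - 1) * rot θ = 1 := by
    rw [← pow_succ, Nat.sub_add_cancel hp, hrot]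
  field_simp [rot_ne_zero] at h ⊢
  rw [← h]

lemma Delta_conj {z : ℂ} (hz : z ∈ Delta θ p) : starRingEnd ℂ z ∈ Delta θ p := by
  rcases (mem_Delta_iff hrot hp).mp hz with h | ⟨k, hk⟩
  · exact (mem_Delta_iff hrot hp).mpr (Or.inl (by simp [h]))
  · refine (mem_Delta_iff hrot hp).mpr (Or.inr ⟨(p - 1) * k, ?_⟩)
    rw [hk, map_pow, conj_rot_eq hrot hp, ← pow_mul]

lemma Delta_norm_le {z : ℂ} (hz : z ∈ Delta θ p) : ‖z‖ ≤ 1 := by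
  rcases (mem_Delta_iff hrot hp).mp hz with h | ⟨k, hk⟩
  · simp [h]
  · rw [hk, norm_pow, norm_rot, one_pow]

/-- forward shift: δ' m = rot^a * conj (δ (m+1)) for m ≥ 1, 0 at 0. -/
lemma Wsigned_shift (a : ℕ) (δ : ℕ → ℂ) (hδ : Wsigned θ p δ) :
    Wsigned θ p (fun m => if m = 0 then 0 else rot θ ^ a * starRingEnd ℂ (δ (m + 1))) := by
  obtain ⟨h0, hmem, hsrc⟩ := hδ
  refine ⟨by simp, ?_, ?_⟩
  · intro n
    by_cases hn : n = 0
    · simp [hn, Delta]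
    · simp only [if_neg hn]
      exact Delta_rotpow_mul hrot hp a (Delta_conj hrot hp (hmem (n + 1)))
  · intro j k hjk hj hk hgap
    simp only at hj hk hgap ⊢
    have hj0 : j ≠ 0 := by rintro rfl; simp at hj
    have hk0 : k ≠ 0 := by omega
    rw [if_neg hj0] at hj
    rw [if_neg hk0] at hk
    rw [if_neg hj0, if_neg hk0]
    have hra : rot θ ^ a ≠ 0 := pow_ne_zero _ (rot_ne_zero θ)
    have hδj : δ (j + 1) ≠ 0 := by
      intro h; rw [h] at hj; simp at hj
    have hδk : δ (k + 1) ≠ 0 := by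
      intro h; rw [h] at hk; simp at hk
    have hgap' : ∀ m, j + 1 < m → m < k + 1 → δ m = 0 := by
      intro m h1 h2
      have hm : m - 1 ≠ 0 := by omega
      have := hgap (m - 1) (by omega) (by omega)
      rw [if_neg hm] at this
      have h3 : starRingEnd ℂ (δ (m - 1 + 1)) = 0 := by
        rcases mul_eq_zero.mp this with h | h
        · exact absurd h hra
        · exact h
      have h4 : δ (m - 1 + 1) = 0 := by
        simpa using congrArg (starRingEnd ℂ) h3
      rwa [show m - 1 + 1 = m by omega] at h4
    have key := hsrc (j + 1) (k + 1) (by omega) hδj hδk hgap'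
    rw [key]
    have hodd : Odd (j + 1) ↔ ¬ Odd j := Nat.odd_add_one
    by_cases hOj : Odd j
    · rw [if_neg (fun h => (hodd.mp h) hOj), if_pos hOj]
      rw [map_mul, conj_rot_inv]
      ring
    · rw [if_pos (hodd.mpr hOj), if_neg hOj]
      rw [map_mul, conj_rot]
      ring

/-- backward shift: δ 0 = 0, δ 1 = c, δ (n+2) = rot^a * conj (δ' (n+1)). -/
lemma Wsigned_unshift (a : ℕ) (c : ℂ) (δ' : ℕ → ℂ) (hδ' : Wsigned θ p δ')
    (hc : c ∈ Delta θ p)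
    (hkey : c = 0 ∨ (rot θ ^ a = rot θ * c ∧ FirstNonzero δ' 1)) :
    Wsigned θ p (fun n => if n = 0 then 0 else if n = 1 then c
      else rot θ ^ a * starRingEnd ℂ (δ' (n - 1))) := by
  obtain ⟨h0', hmem', hsrc'⟩ := hδ'
  have hra : rot θ ^ a ≠ 0 := pow_ne_zero _ (rot_ne_zero θ)
  refine ⟨by simp, ?_, ?_⟩
  · intro n
    match n with
    | 0 => simp only [reduceIte]; exact Set.mem_insert 0 _
    | 1 => simpa using hc
    | (n + 2) =>
      simp only [show (n : ℕ) + 2 ≠ 0 by omega, show (n : ℕ) + 2 ≠ 1 by omega,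
        if_neg, if_false, reduceIte]
      exact Delta_rotpow_mul hrot hp a (Delta_conj hrot hp (hmem' (n + 2 - 1)))
  · intro j k hjk hj hk hgap
    simp only at hj hk hgap ⊢
    have hj0 : j ≠ 0 := by rintro rfl; simp at hj
    have hk0 : k ≠ 0 := by omega
    have hk1 : k ≠ 1 := by
      rintro rfl
      interval_cases j <;> simp_all
    rw [if_neg hk0, if_neg hk1] at hk ⊢
    have hδ'k : δ' (k - 1) ≠ 0 := by
      intro h; rw [h] at hk; simp at hk
    have hgap2 : ∀ m, j < m + 1 → m + 1 < k → δ' m = 0 := by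
      intro m h1 h2
      have hm1 : m + 1 ≠ 0 := by omega
      have hm2 : m + 1 ≠ 1 := by omega
      have := hgap (m + 1) h1 h2
      rw [if_neg hm1, if_neg hm2] at this
      have h3 : starRingEnd ℂ (δ' (m + 1 - 1)) = 0 := by
        rcases mul_eq_zero.mp this with h | h
        · exact absurd h hra
        · exact h
      have h4 : δ' (m + 1 - 1) = 0 := by simpa using congrArg (starRingEnd ℂ) h3
      simpa using h4
    by_cases hj1 : j = 1
    · subst hj1
      rw [if_neg one_ne_zero, if_pos rfl] at hj ⊢
      rcases hkey with rfl | ⟨hu, hfn⟩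
      · exact absurd rfl hj
      have hzero : ∀ m, m < k - 1 → δ' m = 0 := by
        intro m hm
        rcases Nat.eq_zero_or_pos m with rfl | hm0
        · exact h0'
        · exact hgap2 m (by omega) (by omega)
      have hfirst : δ' (k - 1) = 1 := by
        rcases hfn with hall | ⟨j₀, hj₀1, hj₀z⟩
        · exact absurd (hall _) hδ'k
        · rcases lt_trichotomy j₀ (k - 1) with h | h | h
          · exact absurd hj₀1 (by rw [hzero j₀ h]; norm_num)
          · rw [← h, hj₀1]
          · exact absurd (hj₀z _ h) hδ'k
      rw [hfirst]
      rw [if_pos odd_one]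
      rw [map_one, mul_one, hu]
    · have hj2 : 2 ≤ j := by omega
      rw [if_neg hj0, if_neg hj1] at hj ⊢
      have hδ'j : δ' (j - 1) ≠ 0 := by
        intro h; rw [h] at hj; simp at hj
      have hgap' : ∀ m, j - 1 < m → m < k - 1 → δ' m = 0 := by
        intro m h1 h2
        exact hgap2 m (by omega) (by omega)
      have key := hsrc' (j - 1) (k - 1) (by omega) hδ'j hδ'k hgap'
      rw [key]
      have hodd : Odd j ↔ ¬ Odd (j - 1) := by
        rw [show j = (j - 1) + 1 by omega] at hj2 ⊢
        exact Nat.odd_add_one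
      by_cases hOj : Odd (j - 1)
      · rw [if_pos hOj, if_neg (fun h => (hodd.mp h) hOj)]
        rw [map_mul, conj_rot]
        ring
      · rw [if_neg hOj, if_pos (hodd.mpr hOj)]
        rw [map_mul, conj_rot_inv]
        ring

end DeltaLemmas

/-! ### Product and sum lemmas -/

noncomputable def Pe (α : ℂ) (n : ℕ) : ℂ := ∏ j ∈ Finset.Icc 1 n, eta α j

lemma eta_succ' (α : ℂ) (j : ℕ) :
    _root_.eta α (j + 1) = starRingEnd ℂ (_root_.eta α j) := by
  unfold _root_.eta
  by_cases h : Odd j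
  · rw [if_pos h, if_neg (by simp [Nat.odd_add_one, h])]
  · rw [if_neg h, if_pos (Nat.odd_add_one.mpr h), Complex.conj_conj]

lemma Pe_eq_range (α : ℂ) (n : ℕ) : Pe α n = ∏ j ∈ Finset.range n, _root_.eta α (j + 1) := by
  unfold Pe
  rw [show Finset.Icc 1 n = Finset.Ico 1 (n + 1) by rfl, Finset.prod_Ico_eq_prod_range]
  simp [add_comm]

lemma Pe_zero (α : ℂ) : Pe α 0 = 1 := by simp [Pe]

lemma Pe_succ (α : ℂ) (n : ℕ) : Pe α (n + 1) = α * starRingEnd ℂ (Pe α n) := by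
  rw [Pe_eq_range, Finset.prod_range_succ', Pe_eq_range, map_prod]
  have h1 : ∀ j ∈ Finset.range n,
      _root_.eta α (j + 1 + 1) = starRingEnd ℂ (_root_.eta α (j + 1)) :=
    fun j _ => eta_succ' α (j + 1)
  rw [Finset.prod_congr rfl h1]
  have h2 : _root_.eta α (0 + 1) = α := by simp [_root_.eta]
  rw [h2, mul_comm]

lemma norm_eta' (α : ℂ) (j : ℕ) : ‖_root_.eta α j‖ = ‖α‖ := by
  unfold _root_.eta; split <;> simp

lemma norm_Pe (α : ℂ) (n : ℕ) : ‖Pe α n‖ = ‖α‖ ^ n := by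
  rw [Pe_eq_range, norm_prod]
  simp only [norm_eta']
  simp

lemma summable_aux {α : ℂ} (hα : ‖α‖ < 1) (f : ℕ → ℂ)
    (h : ∀ n, ‖f n‖ ≤ ‖α‖ ^ n) : Summable f :=
  Summable.of_norm_bounded (summable_geometric_of_lt_one (norm_nonneg α) hα) h

lemma norm_conj' (z : ℂ) : ‖starRingEnd ℂ z‖ = ‖z‖ := norm_star z

lemma sum_rel {α : ℂ} (hα : ‖α‖ < 1) (u c : ℂ) (δ δ' : ℕ → ℂ)
    (h0 : δ 0 = 0) (h1 : δ 1 = c) (h0' : δ' 0 = 0)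
    (hrel : ∀ m, 1 ≤ m → δ (m + 1) = u * starRingEnd ℂ (δ' m))
    (hbd : ∀ n, ‖δ n‖ ≤ 1) (hbd' : ∀ n, ‖δ' n‖ ≤ 1) :
    ∑' n, δ n * Pe α n = α * u * starRingEnd ℂ (∑' n, δ' n * Pe α n) + α * c := by
  have hpow : ∀ n : ℕ, (0:ℝ) ≤ ‖α‖ ^ n := fun n => pow_nonneg (norm_nonneg α) n
  have hs1 : Summable (fun n => δ n * Pe α n) :=
    summable_aux hα _ (fun n => by
      rw [norm_mul, norm_Pe]
      calc ‖δ n‖ * ‖α‖ ^ n ≤ 1 * ‖α‖ ^ n := mul_le_mul_of_nonneg_right (hbd n) (hpow n)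
        _ = ‖α‖ ^ n := one_mul _)
  have hs2 : Summable (fun m => δ (m + 1) * starRingEnd ℂ (Pe α m)) :=
    summable_aux hα _ (fun n => by
      rw [norm_mul, norm_conj', norm_Pe]
      calc ‖δ (n+1)‖ * ‖α‖ ^ n ≤ 1 * ‖α‖ ^ n := mul_le_mul_of_nonneg_right (hbd _) (hpow n)
        _ = ‖α‖ ^ n := one_mul _)
  have hs3 : Summable (fun n => starRingEnd ℂ (δ' n * Pe α n)) :=
    summable_aux hα _ (fun n => by
      rw [norm_conj', norm_mul, norm_Pe]
      calc ‖δ' n‖ * ‖α‖ ^ n ≤ 1 * ‖α‖ ^ n := mul_le_mul_of_nonneg_right (hbd' _) (hpow n)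
        _ = ‖α‖ ^ n := one_mul _)
  rw [Summable.tsum_eq_zero_add hs1, h0, zero_mul, zero_add]
  have e1 : ∀ n : ℕ, δ (n + 1) * Pe α (n + 1) = α * (δ (n + 1) * starRingEnd ℂ (Pe α n)) :=
    fun n => by rw [Pe_succ]; ring
  rw [tsum_congr e1, tsum_mul_left, Summable.tsum_eq_zero_add hs2, h1, Pe_zero, map_one, mul_one]
  have e2 : ∀ m : ℕ, δ (m + 1 + 1) * starRingEnd ℂ (Pe α (m + 1))
      = u * starRingEnd ℂ (δ' (m + 1) * Pe α (m + 1)) :=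
    fun m => by rw [hrel (m + 1) (by omega), map_mul]; ring
  rw [tsum_congr e2, tsum_mul_left]
  have h3 : starRingEnd ℂ (∑' n, δ' n * Pe α n) = ∑' n, starRingEnd ℂ (δ' n * Pe α n) :=
    tsum_star
  rw [h3, Summable.tsum_eq_zero_add hs3, h0', zero_mul, map_zero, zero_add]
  ring

/-- X²₁ = ψ₁(X²₁) ∪ ψ₂(X²₁) with ψ₁(z) = α·conj z, ψ₂(z) = αe^{iθ}·conj z + α. -/
theorem X2one_set_equation (α : ℂ) (θ : ℝ) (p : ℕ) (q : ℤ) (hp : 0 < p)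
    (hθ : θ = 2 * Real.pi * (q : ℝ) / (p : ℝ)) (hα0 : 0 < ‖α‖) (hα : ‖α‖ < 1) :
    X2one α θ p =
      (fun z => α * starRingEnd ℂ z) '' X2one α θ p ∪
      (fun z => α * rot θ * starRingEnd ℂ z + α) '' X2one α θ p := by
  have hrot : rot θ ^ p = 1 := rot_pow_p θ p q hp hθ
  have hPe : ∀ δ : ℕ → ℂ,
      (∑' n, δ n * ∏ j ∈ Finset.Icc 1 n, _root_.eta α j) = ∑' n, δ n * Pe α n :=
    fun δ => rfl
  ext x
  simp only [Set.mem_union, Set.mem_image, X2one, Set.mem_setOf_eq]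
  constructor
  · rintro ⟨δ, hW, hfn, hx⟩
    obtain ⟨h0, hmem, hsrc⟩ := hW
    have hbd : ∀ n, ‖δ n‖ ≤ 1 := fun n => Delta_norm_le hrot hp (hmem n)
    rw [hPe δ] at hx
    by_cases hδ1 : δ 1 = 0
    · -- ψ₁ branch
      left
      set δ' : ℕ → ℂ :=
        fun m => if m = 0 then 0 else rot θ ^ 0 * starRingEnd ℂ (δ (m + 1)) with hδ'def
      have hW' : Wsigned θ p δ' := Wsigned_shift hrot hp 0 δ ⟨h0, hmem, hsrc⟩
      have hbd' : ∀ n, ‖δ' n‖ ≤ 1 := fun n => Delta_norm_le hrot hp (hW'.2.1 n)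
      have hfn' : FirstNonzero δ' 1 := by
        rcases hfn with hall | ⟨j, hj1, hjz⟩
        · left
          intro n
          by_cases hn : n = 0
          · simp [hδ'def, hn]
          · simp [hδ'def, hn, hall]
        · right
          have hjne0 : j ≠ 0 := by
            rintro rfl; rw [h0] at hj1; norm_num at hj1
          have hjne1 : j ≠ 1 := by
            rintro rfl; rw [hδ1] at hj1; norm_num at hj1
          refine ⟨j - 1, ?_, ?_⟩
          · have h1 : j - 1 ≠ 0 := by omega
            simp only [hδ'def, if_neg h1, pow_zero, one_mul]
            rw [show j - 1 + 1 = j by omega, hj1, map_one]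
          · intro m hm
            by_cases hm0 : m = 0
            · simp [hδ'def, hm0]
            · simp only [hδ'def, if_neg hm0, pow_zero, one_mul]
              rw [hjz (m + 1) (by omega), map_zero]
      refine ⟨∑' n, δ' n * Pe α n, ⟨δ', hW', hfn', (hPe δ').symm⟩, ?_⟩
      have hrel : ∀ m, 1 ≤ m → δ (m + 1) = 1 * starRingEnd ℂ (δ' m) := by
        intro m hm
        simp only [hδ'def, if_neg (by omega : m ≠ 0), pow_zero, one_mul, map_mul,
          Complex.conj_conj]
      have hsum := sum_rel hα 1 0 δ δ' h0 hδ1 hW'.1 hrel hbd hbd'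
      rw [hx, hsum]
      ring
    · -- ψ₂ branch
      right
      have hδ1' : δ 1 = 1 := by
        rcases hfn with hall | ⟨j, hj1, hjz⟩
        · exact absurd (hall 1) hδ1
        · have hj : j = 1 := by
            have hjne0 : j ≠ 0 := by
              rintro rfl; rw [h0] at hj1; norm_num at hj1
            by_contra h
            exact hδ1 (hjz 1 (by omega))
          rwa [hj] at hj1
      set δ' : ℕ → ℂ :=
        fun m => if m = 0 then 0 else rot θ ^ 1 * starRingEnd ℂ (δ (m + 1)) with hδ'def
      have hW' : Wsigned θ p δ' := Wsigned_shift hrot hp 1 δ ⟨h0, hmem, hsrc⟩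
      have hbd' : ∀ n, ‖δ' n‖ ≤ 1 := fun n => Delta_norm_le hrot hp (hW'.2.1 n)
      have hfn' : FirstNonzero δ' 1 := by
        by_cases hall : ∀ m, 2 ≤ m → δ m = 0
        · left
          intro n
          by_cases hn : n = 0
          · simp [hδ'def, hn]
          · simp only [hδ'def, if_neg hn]
            rw [hall (n + 1) (by omega), map_zero, mul_zero]
        · push_neg at hall
          obtain ⟨m, hm2, hmne⟩ := hall
          have hex : ∃ m, 2 ≤ m ∧ δ m ≠ 0 := ⟨m, hm2, hmne⟩
          set k := Nat.find hex with hkdef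
          obtain ⟨hk2, hkne⟩ := Nat.find_spec hex
          have hgap : ∀ m, 1 < m → m < k → δ m = 0 := by
            intro m h1 h2
            by_contra h
            exact Nat.find_min hex h2 ⟨h1, h⟩
          have key := hsrc 1 k (by omega) hδ1 hkne hgap
          rw [if_pos odd_one, hδ1', mul_one] at key
          right
          refine ⟨k - 1, ?_, ?_⟩
          · simp only [hδ'def, if_neg (show k - 1 ≠ 0 by omega)]
            rw [show k - 1 + 1 = k by omega, key, pow_one, rot_mul_conj]
          · intro m hm
            by_cases hm0 : m = 0
            · simp [hδ'def, hm0]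
            · simp only [hδ'def, if_neg hm0]
              rw [hgap (m + 1) (by omega) (by omega), map_zero, mul_zero]
      refine ⟨∑' n, δ' n * Pe α n, ⟨δ', hW', hfn', (hPe δ').symm⟩, ?_⟩
      have hrel : ∀ m, 1 ≤ m → δ (m + 1) = rot θ * starRingEnd ℂ (δ' m) := by
        intro m hm
        simp only [hδ'def, if_neg (by omega : m ≠ 0), pow_one, map_mul, Complex.conj_conj]
        rw [← mul_assoc, rot_mul_conj, one_mul]
      have hsum := sum_rel hα (rot θ) 1 δ δ' h0 hδ1' hW'.1 hrel hbd hbd'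
      rw [hx, hsum]
      ring
  · rintro (⟨x', ⟨δ', hW', hfn', hx'⟩, rfl⟩ | ⟨x', ⟨δ', hW', hfn', hx'⟩, rfl⟩)
    · -- ψ₁ preimage
      rw [hPe δ'] at hx'
      have hbd' : ∀ n, ‖δ' n‖ ≤ 1 := fun n => Delta_norm_le hrot hp (hW'.2.1 n)
      set δ : ℕ → ℂ := fun n => if n = 0 then 0 else if n = 1 then (0:ℂ)
        else rot θ ^ 0 * starRingEnd ℂ (δ' (n - 1)) with hδdef
      have hW : Wsigned θ p δ :=
        Wsigned_unshift hrot hp 0 0 δ' hW' (Set.mem_insert 0 _) (Or.inl rfl)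
      have hbd : ∀ n, ‖δ n‖ ≤ 1 := fun n => Delta_norm_le hrot hp (hW.2.1 n)
      have hfn : FirstNonzero δ 1 := by
        rcases hfn' with hall | ⟨j₀, hj₀1, hj₀z⟩
        · left
          intro n
          match n with
          | 0 => simp [hδdef]
          | 1 => simp [hδdef]
          | (n + 2) =>
            simp only [hδdef, show (n:ℕ) + 2 ≠ 0 by omega, show (n:ℕ) + 2 ≠ 1 by omega,
              if_neg, if_false, reduceIte]
            rw [hall, map_zero, mul_zero]
        · right
          have hj₀0 : j₀ ≠ 0 := by
            rintro rfl; rw [hW'.1] at hj₀1; norm_num at hj₀1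
          refine ⟨j₀ + 1, ?_, ?_⟩
          · simp only [hδdef, show j₀ + 1 ≠ 0 by omega, show j₀ + 1 ≠ 1 by omega,
              if_neg, if_false, reduceIte]
            rw [show j₀ + 1 - 1 = j₀ by omega, hj₀1, pow_zero, one_mul, map_one]
          · intro m hm
            match m with
            | 0 => simp [hδdef]
            | 1 => simp [hδdef]
            | (m + 2) =>
              simp only [hδdef, show (m:ℕ) + 2 ≠ 0 by omega, show (m:ℕ) + 2 ≠ 1 by omega,
                if_neg, if_false, reduceIte]
              rw [hj₀z (m + 2 - 1) (by omega), map_zero, mul_zero]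
      refine ⟨δ, hW, hfn, ?_⟩
      have hrel : ∀ m, 1 ≤ m → δ (m + 1) = 1 * starRingEnd ℂ (δ' m) := by
        intro m hm
        simp only [hδdef, show m + 1 ≠ 0 by omega, show m + 1 ≠ 1 by omega,
          if_neg, if_false, reduceIte]
        rw [show m + 1 - 1 = m by omega, pow_zero]
      have hsum := sum_rel hα 1 0 δ δ' (by simp [hδdef]) (by simp [hδdef]) hW'.1
        hrel hbd hbd'
      rw [hPe δ, hsum, hx']
      ring
    · -- ψ₂ preimage
      rw [hPe δ'] at hx'
      have hbd' : ∀ n, ‖δ' n‖ ≤ 1 := fun n => Delta_norm_le hrot hp (hW'.2.1 n)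
      set δ : ℕ → ℂ := fun n => if n = 0 then 0 else if n = 1 then (1:ℂ)
        else rot θ ^ 1 * starRingEnd ℂ (δ' (n - 1)) with hδdef
      have hW : Wsigned θ p δ :=
        Wsigned_unshift hrot hp 1 1 δ' hW' (one_mem_Delta hrot hp)
          (Or.inr ⟨by rw [pow_one, mul_one], hfn'⟩)
      have hbd : ∀ n, ‖δ n‖ ≤ 1 := fun n => Delta_norm_le hrot hp (hW.2.1 n)
      have hfn : FirstNonzero δ 1 := by
        right
        refine ⟨1, by simp [hδdef], ?_⟩
        intro m hm
        interval_cases m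
        simp [hδdef]
      refine ⟨δ, hW, hfn, ?_⟩
      have hrel : ∀ m, 1 ≤ m → δ (m + 1) = rot θ * starRingEnd ℂ (δ' m) := by
        intro m hm
        simp only [hδdef, show m + 1 ≠ 0 by omega, show m + 1 ≠ 1 by omega,
          if_neg, if_false, reduceIte]
        rw [show m + 1 - 1 = m by omega, pow_one]
      have hsum := sum_rel hα (rot θ) 1 δ δ' (by simp [hδdef]) (by simp [hδdef]) hW'.1
        hrel hbd hbd'
      rw [hPe δ, hsum, hx']
      ring
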